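/- Let X be a topological space each of whose irreducible components has topological Krull dimension equal to 2, let F be a closed subset of X of topological Krull dimension at most 1, and let Σ be a dense subset of X. Then Σ \ F is dense in X (and hence dense in the open subspace X \ F). -/

import Mathlib

/-- Let `X` be a topological space all of whose irreducible components have topological Krull
dimension `2`, let `F ⊆ X` be closed of topological Krull dimension at most `1`, and let `S`
be a dense subset of `X`.  Then `S \ F` is dense in `X`, and hence the corresponding subset is
dense in the open subspace `X \ F`. -/
theorem stmt_6 {X : Type*} [TopologicalSpace X]
    (hcomp : ∀ C ∈ irreducibleComponents X, topologicalKrullDim C = 2)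
    (F : Set X) (hF : IsClosed F) (hFdim : topologicalKrullDim F ≤ 1)
    (S : Set X) (hS : Dense S) :
    Dense (S \ F) ∧ Dense (Subtype.val ⁻¹' S : Set (↥Fᶜ)) := by
  -- First: `interior F = ∅`.
  have hint : interior F = ∅ := by
    by_contra h
    obtain ⟨x, hx⟩ := Set.nonempty_iff_ne_empty.2 h
    -- `x` lies in its irreducible component `C`, with `dim C = 2`.
    set C := irreducibleComponent x with hC
    have hCmem : C ∈ irreducibleComponents X := irreducibleComponent_mem_irreducibleComponents x
    have hCirr : IsIrreducible C := isIrreducible_irreducibleComponent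
    have hCclosed : IsClosed C := isClosed_irreducibleComponent
    -- `C ∩ interior F` is nonempty open in an irreducible set, so dense in `C`, so `C ⊆ F`.
    have hne : (C ∩ interior F).Nonempty := ⟨x, mem_irreducibleComponent, hx⟩
    have hCF : C ⊆ F := by
      -- closure of (C ∩ interior F) in X contains C
      have hsub : C ⊆ closure (C ∩ interior F) := by
        intro y hy
        rw [mem_closure_iff]
        intro U hU hyU
        have : (C ∩ (U ∩ interior F)).Nonempty :=
          hCirr.2 U (interior F) hU isOpen_interior ⟨y, hy, hyU⟩
            ((Set.inter_comm _ _) ▸ hne)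
        obtain ⟨z, hzC, hzU, hzF⟩ := this
        exact ⟨z, hzU, hzC, hzF⟩
      intro y hy
      have := hsub hy
      have : y ∈ closure (interior F) :=
        closure_mono (Set.inter_subset_right) this
      exact hF.closure_subset (closure_mono interior_subset this)
    -- Then `C` embeds closedly into `F`, so `dim C ≤ dim F ≤ 1`, contradiction with `dim C = 2`.
    have hemb : Topology.IsClosedEmbedding (Set.inclusion hCF) := by
      refine ⟨Topology.IsEmbedding.inclusion hCF, ?_⟩
      have : Set.range (Set.inclusion hCF) = (Subtype.val ⁻¹' C : Set F) := by
        ext ⟨y, hy⟩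
        constructor
        · rintro ⟨⟨z, hz⟩, h⟩
          have : z = y := congrArg Subtype.val h
          subst this; exact hz
        · intro hyC; exact ⟨⟨y, hyC⟩, rfl⟩
      rw [this]
      exact hCclosed.preimage continuous_subtype_val
    have hle : topologicalKrullDim C ≤ topologicalKrullDim F :=
      hemb.isInducing.topologicalKrullDim_le
    rw [hcomp C hCmem] at hle
    have : (2 : WithBot ℕ∞) ≤ 1 := hle.trans hFdim
    norm_num at this
  -- `S \ F` is dense.
  have hdense : Dense (S \ F) := by
    rw [dense_iff_inter_open]
    intro U hU hUne
    have hUF : ¬ U ⊆ F := fun h => by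
      obtain ⟨u, hu⟩ := hUne
      have : u ∈ interior F := interior_maximal h hU hu
      simp [hint] at this
    obtain ⟨u, huU, huF⟩ := Set.not_subset.1 hUF
    have : (U ∩ Fᶜ ∩ S).Nonempty :=
      hS.inter_open_nonempty _ (hU.inter hF.isOpen_compl) ⟨u, huU, huF⟩
    obtain ⟨s, ⟨hsU, hsF⟩, hsS⟩ := this
    exact ⟨s, hsU, hsS, hsF⟩
  refine ⟨hdense, ?_⟩
  -- Density in the subspace `Fᶜ`.
  intro x
  rw [closure_subtype]
  have : (x : X) ∈ closure (S \ F) := hdense _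
  refine closure_mono ?_ this
  rintro y ⟨hyS, hyF⟩
  exact ⟨⟨y, hyF⟩, hyS, rfl⟩
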